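/- (Light aberration, angle form.) Let u, u′ be observers and F a frequency vector in Minkowski space, with F = ν(u + w) = ν′(u′ + w′), where w ∈ u^⊥, w′ ∈ u′^⊥ are the relative velocities of the light ray observed by u, u′, and u′ = γ(u + v) with v ∈ u^⊥, v ≠ 0. Let cos θ = g(−w, v)/‖v‖, let P = π_{u′^⊥}(v) be the projection of v onto u′^⊥, and let cos θ′ = g(−w′, P)/‖P‖. Then P ≠ 0 and cos θ = (cos θ′ − ‖v‖)/(1 − ‖v‖ cos θ′). This is the pointwise content of the paper's generalized aberration formula (equation (abegen2) of Proposition 2). -/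

import Mathlib

noncomputable section

/-- The Minkowski bilinear form on ℝ⁴ (signature (−,+,+,+)). -/
def g (x y : Fin 4 → ℝ) : ℝ :=
  -(x 0 * y 0) + x 1 * y 1 + x 2 * y 2 + x 3 * y 3

/-- An observer: a future-pointing timelike unit vector. -/
def IsObserver (u : Fin 4 → ℝ) : Prop := g u u = -1 ∧ 0 < u 0

/-- A frequency vector: a future-pointing lightlike vector. -/
def IsFrequencyVector (F : Fin 4 → ℝ) : Prop := F ≠ 0 ∧ g F F = 0 ∧ 0 < F 0

/-- The g-orthogonal projection of `x` onto `u'^⊥`. -/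
def proj (u' x : Fin 4 → ℝ) : Fin 4 → ℝ := x + g x u' • u'

lemma g_symm' (x y : Fin 4 → ℝ) : g x y = g y x := by
  simp only [g]; ring

lemma gamma_pos' (u u' : Fin 4 → ℝ) (hu : g u u = -1) (h0 : 0 < u 0)
    (hu' : g u' u' = -1) (h0' : 0 < u' 0) : 0 < -(g u u') := by
  simp only [g] at *
  nlinarith [sq_nonneg (u 1 * u' 2 - u 2 * u' 1), sq_nonneg (u 1 * u' 3 - u 3 * u' 1),
    sq_nonneg (u 2 * u' 3 - u 3 * u' 2), mul_pos h0 h0',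
    sq_nonneg (u 1 * u' 1 + u 2 * u' 2 + u 3 * u' 3 - u 0 * u' 0),
    sq_nonneg (u 1 * u' 1 + u 2 * u' 2 + u 3 * u' 3 + u 0 * u' 0)]

lemma perp_pos' (u v : Fin 4 → ℝ) (hu : g u u = -1) (h0 : 0 < u 0)
    (hv : g u v = 0) (hvne : v ≠ 0) : 0 < g v v := by
  have hbar : v 1 ≠ 0 ∨ v 2 ≠ 0 ∨ v 3 ≠ 0 := by
    by_contra h
    push_neg at h
    obtain ⟨h1, h2, h3⟩ := h
    apply hvne
    have h0v : v 0 = 0 := by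
      simp only [g, h1, h2, h3] at hv
      have := h0.ne'
      nlinarith
    funext i
    fin_cases i <;> simp [h0v, h1, h2, h3]
  have hpos : 0 < v 1 ^ 2 + v 2 ^ 2 + v 3 ^ 2 := by
    rcases hbar with h | h | h <;> positivity
  simp only [g] at hu hv ⊢
  have hC : u 0 * v 0 = u 1 * v 1 + u 2 * v 2 + u 3 * v 3 := by linarith
  have hC2 : (u 0 * v 0) ^ 2 = (u 1 * v 1 + u 2 * v 2 + u 3 * v 3) ^ 2 := by rw [hC]
  have key : (u 0) ^ 2 * ((v 1 ^ 2 + v 2 ^ 2 + v 3 ^ 2) - (v 0) ^ 2)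
      ≥ v 1 ^ 2 + v 2 ^ 2 + v 3 ^ 2 := by
    nlinarith [sq_nonneg (u 1 * v 2 - u 2 * v 1), sq_nonneg (u 1 * v 3 - u 3 * v 1),
      sq_nonneg (u 2 * v 3 - u 3 * v 2), hC2]
  nlinarith [key, hpos, mul_pos h0 h0]

set_option maxHeartbeats 1000000 in
/-- Light aberration, angle form: with `cos θ = g(−w,v)/‖v‖`,
`P = π_{u'^⊥}(v)` and `cos θ' = g(−w',P)/‖P‖`, one has `P ≠ 0` and
`cos θ = (cos θ' − ‖v‖)/(1 − ‖v‖ cos θ')`. -/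
theorem aberration_angle (u u' F v w w' : Fin 4 → ℝ) (ν ν' γ : ℝ)
    (hu : IsObserver u) (hu' : IsObserver u') (hF : IsFrequencyVector F)
    (hν : ν = -(g F u)) (hν' : ν' = -(g F u'))
    (hνpos : 0 < ν) (hν'pos : 0 < ν')
    (hw : g u w = 0) (hFw : F = ν • (u + w))
    (hw' : g u' w' = 0) (hFw' : F = ν' • (u' + w'))
    (hv : g u v = 0) (hγ : γ = -(g u u')) (hu'v : u' = γ • (u + v))
    (hvne : v ≠ 0) :
    proj u' v ≠ 0 ∧
    g (-w) v / Real.sqrt (g v v) =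
      (g (-w') (proj u' v) / Real.sqrt (g (proj u' v) (proj u' v))
          - Real.sqrt (g v v)) /
      (1 - Real.sqrt (g v v) *
          (g (-w') (proj u' v) / Real.sqrt (g (proj u' v) (proj u' v)))) := by
  obtain ⟨huu, hu0⟩ := hu
  obtain ⟨hu'u', hu'0⟩ := hu'
  -- basic scalar facts
  have hγpos : 0 < γ := hγ ▸ gamma_pos' u u' huu hu0 hu'u' hu'0
  have hs2pos : 0 < g v v := perp_pos' u v huu hu0 hv hvne
  set s2 : ℝ := g v v with hs2def
  set a : ℝ := g w v with hadef
  have hvu : g v u = 0 := (g_symm' v u).trans hv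
  have hwu : g w u = 0 := (g_symm' w u).trans hw
  have hw'u' : g w' u' = 0 := (g_symm' w' u').trans hw'
  -- γ² (1 - s2) = 1
  have key1 : γ ^ 2 * (1 - s2) = 1 := by
    have h : g u' u' = γ * γ * (g u u + g u v + g v u + g v v) := by
      rw [hu'v]
      simp only [g, Pi.smul_apply, Pi.add_apply, smul_eq_mul]
      ring
    rw [hu'u', huu, hv, hvu] at h
    linear_combination h
  -- ν' = ν γ (1 - a)
  have hν'eq : ν' = ν * γ * (1 - a) := by
    have h : g F u' = ν * γ * (g u u + g u v + g w u + g w v) := by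
      rw [hFw, hu'v]
      simp only [g, Pi.smul_apply, Pi.add_apply, smul_eq_mul]
      ring
    rw [huu, hv, hwu] at h
    rw [hν', h]; ring
  have h1a : 0 < 1 - a := by
    have hνγ : 0 < ν * γ := mul_pos hνpos hγpos
    nlinarith [hν'pos, hν'eq]
  -- g v u' = γ s2
  have hvu' : g v u' = γ * s2 := by
    have h : g v u' = γ * (g v u + g v v) := by
      rw [hu'v]
      simp only [g, Pi.smul_apply, Pi.add_apply, smul_eq_mul]
      ring
    rw [hvu] at h; rw [h]; ring
  have hu'veq : g u' v = γ * s2 := (g_symm' u' v).trans hvu'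
  -- g F v = ν a
  have hFv : g F v = ν * a := by
    have h : g F v = ν * (g u v + g w v) := by
      rw [hFw]
      simp only [g, Pi.smul_apply, Pi.add_apply, smul_eq_mul]
      ring
    rw [hv] at h; rw [h]; ring
  -- ν' * g w' v = ν a - ν' γ s2
  have hw'v : ν' * g w' v = ν * a - ν' * (γ * s2) := by
    have h : g F v = ν' * (g u' v + g w' v) := by
      rw [hFw']
      simp only [g, Pi.smul_apply, Pi.add_apply, smul_eq_mul]
      ring
    rw [hu'veq, hFv] at h
    linarith [h]
  -- the projection P
  have hPP : g (proj u' v) (proj u' v) = γ ^ 2 * s2 := by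
    have h : g (proj u' v) (proj u' v) =
        g v v + g v u' * (g v u' + g u' v + g v u' * g u' u') := by
      simp only [proj, g, Pi.smul_apply, Pi.add_apply, smul_eq_mul]
      ring
    rw [hvu', hu'veq, hu'u'] at h
    rw [h]
    linear_combination (-s2) * key1
  have hw'P : g w' (proj u' v) = g w' v := by
    have h : g w' (proj u' v) = g w' v + g v u' * g w' u' := by
      simp only [proj, g, Pi.smul_apply, Pi.add_apply, smul_eq_mul]
      ring
    rw [hw'u'] at h; rw [h]; ring
  have hPne : proj u' v ≠ 0 := by
    intro h
    have : g (proj u' v) (proj u' v) = 0 := by rw [h]; simp [g]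
    rw [hPP] at this
    exact (by positivity : (0:ℝ) < γ ^ 2 * s2).ne' this
  refine ⟨hPne, ?_⟩
  -- scalar computation
  set s : ℝ := Real.sqrt s2 with hsdef
  have hspos : 0 < s := Real.sqrt_pos.mpr hs2pos
  have hs2 : s ^ 2 = s2 := Real.sq_sqrt hs2pos.le
  have hsqrtPP : Real.sqrt (g (proj u' v) (proj u' v)) = γ * s := by
    rw [hPP, show γ ^ 2 * s2 = (γ * s) ^ 2 by rw [← hs2]; ring]
    exact Real.sqrt_sq (by positivity)
  have hgnw : g (-w) v = -a := by
    simp only [g, Pi.neg_apply] at hadef ⊢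
    linarith [hadef]
  have hgnw' : g (-w') (proj u' v) = -(g w' v) := by
    rw [show g (-w') (proj u' v) = -(g w' (proj u' v)) by
      simp only [g, Pi.neg_apply]; ring, hw'P]
  rw [hgnw, hgnw', hsqrtPP]
  -- explicit value of g w' v
  have hν'ne : ν' ≠ 0 := hν'pos.ne'
  have hγne : γ ≠ 0 := hγpos.ne'
  have h1ane : (1 : ℝ) - a ≠ 0 := h1a.ne'
  have hne : γ * (1 - a) ≠ 0 := mul_ne_zero hγne h1ane
  have h2 : γ * (1 - a) * g w' v = a - γ * (1 - a) * (γ * s2) := by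
    apply mul_left_cancel₀ hνpos.ne'
    have h3 := hw'v
    rw [hν'eq] at h3
    linear_combination h3
  have hgw'v : g w' v = a / (γ * (1 - a)) - γ * s ^ 2 := by
    rw [hs2, eq_sub_iff_add_eq, eq_div_iff hne]
    linear_combination h2
  have hsne : s ≠ 0 := hspos.ne'
  have hX : -(g w' v) / (γ * s) = s - a / (γ ^ 2 * (1 - a) * s) := by
    rw [hgw'v]; field_simp; ring
  rw [hX]
  have h1s2 : 1 - s2 = 1 / γ ^ 2 := by
    rw [eq_div_iff (pow_ne_zero 2 hγne)]
    linear_combination key1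
  have hden2 : 1 - s * (s - a / (γ ^ 2 * (1 - a) * s)) = 1 / (γ ^ 2 * (1 - a)) := by
    have e1 : s * (a / (γ ^ 2 * (1 - a) * s)) = a / (γ ^ 2 * (1 - a)) := by
      field_simp
    have e2 : 1 - s * (s - a / (γ ^ 2 * (1 - a) * s)) = 1 - s2 + a / (γ ^ 2 * (1 - a)) := by
      rw [mul_sub, e1, ← hs2]; ring
    rw [e2, h1s2]
    field_simp
    ring
  have hnum2 : s - a / (γ ^ 2 * (1 - a) * s) - s = -a / (γ ^ 2 * (1 - a) * s) := by
    ring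
  rw [hden2, hnum2]
  field_simp
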